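/- In the d = k+1 code, node repair is possible: let p_1,...,p_{k+1}, p_f ∈ F_q^k be such that every k of them are linearly independent, and let r_1,...,r_{k+1} ∈ F_q^k be arbitrary. Then there exist scalars λ_1,...,λ_{k+1} ∈ F_q and vectors ρ, δ ∈ F_q^{k+1} and a vector r̃_f ∈ F_q^k such that, with c_i = λ_i(p_iᵀu_1) + (p_iᵀu_2 + r_iᵀu_1) for i = 1,...,k+1 and for all u_1, u_2 ∈ F_q^k: Σ ρ_i c_i = p_fᵀu_1 and Σ δ_i c_i = p_fᵀu_2 + r̃_fᵀu_1. -/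
import Mathlib
open scoped Matrix

private lemma sum_smul_dotProduct {F : Type*} [Field F] {m k : ℕ}
    (c : Fin m → F) (w : Fin m → Fin k → F) (u : Fin k → F) :
    (∑ i, c i • w i) ⬝ᵥ u = ∑ i, c i * (w i ⬝ᵥ u) := by
  simp [dotProduct, Finset.sum_apply, Finset.mul_sum, Finset.sum_mul, mul_assoc]
  rw [Finset.sum_comm]

/-- Node repair in the `d = k + 1` code: with `p_1, …, p_{k+1}, p_f` (encoded as
`P 0, …, P k, P (last)`) such that every `k` of them are linearly independent, there
are repair coefficients `λ_i` and combination vectors `ρ, δ` recovering the exact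
component `p_fᵀu₁` and the second symbol up to an auxiliary part `r̃_fᵀu₁`. -/
theorem dkp1_repair
    {F : Type*} [Field F] [Fintype F] {k : ℕ}
    (P : Fin (k + 2) → (Fin k → F))
    (r : Fin (k + 1) → (Fin k → F))
    (hP : ∀ s : Fin k → Fin (k + 2), Function.Injective s →
      LinearIndependent F (P ∘ s)) :
    ∃ (lam ρ δ : Fin (k + 1) → F) (rt : Fin k → F),
      ∀ u₁ u₂ : Fin k → F,
        (∑ i : Fin (k + 1),
            ρ i * (lam i * (P i.castSucc ⬝ᵥ u₁) + (P i.castSucc ⬝ᵥ u₂ + r i ⬝ᵥ u₁))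
          = P (Fin.last (k + 1)) ⬝ᵥ u₁) ∧
        (∑ i : Fin (k + 1),
            δ i * (lam i * (P i.castSucc ⬝ᵥ u₁) + (P i.castSucc ⬝ᵥ u₂ + r i ⬝ᵥ u₁))
          = P (Fin.last (k + 1)) ⬝ᵥ u₂ + rt ⬝ᵥ u₁) := by
  classical
  set p : Fin (k + 1) → (Fin k → F) := fun i => P i.castSucc with hp
  -- first k of the p's form a basis
  have hind : LinearIndependent F (fun i : Fin k => p i.castSucc) := by
    have : LinearIndependent F (P ∘ (fun i : Fin k => i.castSucc.castSucc)) :=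
      hP _ (fun a b h => by
        apply Fin.castSucc_injective; apply Fin.castSucc_injective
        exact h)
    exact this
  -- spanning: every v is a combination of the first k p's
  have hspan : ∀ v : Fin k → F, ∃ a : Fin (k + 1) → F,
      a (Fin.last k) = 0 ∧ ∑ i, a i • p i = v := by
    intro v
    cases k with
    | zero =>
        refine ⟨fun _ => 0, rfl, ?_⟩
        funext j; exact absurd j.2 (by omega)
    | succ k' =>
        have hcard : Fintype.card (Fin (k' + 1)) = Module.finrank F (Fin (k' + 1) → F) := by
          simp [Module.finrank_fin_fun]
        let B := basisOfLinearIndependentOfCardEqFinrank hind hcard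
        have hB : ∀ i, B i = p i.castSucc := fun i =>
          congrFun (coe_basisOfLinearIndependentOfCardEqFinrank hind hcard) i
        refine ⟨Fin.snoc (fun i => B.repr v i) 0, Fin.snoc_last _ _, ?_⟩
        rw [Fin.sum_univ_castSucc]
        simp only [Fin.snoc_last, zero_smul, add_zero, Fin.snoc_castSucc]
        simp only [← hB]
        exact B.sum_repr v
  -- dependence relation among all k+1 p's, with all coefficients nonzero
  have hdep : ¬ LinearIndependent F p := by
    intro h
    have := h.fintype_card_le_finrank
    simp [Module.finrank_fin_fun] at this
  obtain ⟨ρ, hρ0, j₀, hj₀⟩ := Fintype.not_linearIndependent_iff.mp hdep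
  have hρne : ∀ i, ρ i ≠ 0 := by
    intro j hj
    have hinj : Function.Injective (fun i : Fin k => (j.succAbove i).castSucc) := by
      intro a b h
      exact Fin.succAbove_right_injective (Fin.castSucc_injective _ h)
    have hli : LinearIndependent F (fun i : Fin k => p (j.succAbove i)) :=
      hP _ hinj
    have hsum : ∑ i : Fin k, ρ (j.succAbove i) • p (j.succAbove i) = 0 := by
      have := hρ0
      rw [Fin.sum_univ_succAbove _ j, hj, zero_smul, zero_add] at this
      exact this
    have hz := linearIndependent_iff'.mp hli Finset.univ _ hsum
    rcases eq_or_ne j₀ j with rfl | hne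
    · exact hj₀ hj
    · obtain ⟨i, hi⟩ := Fin.exists_succAbove_eq hne
      exact hj₀ (by rw [← hi]; exact hz i (Finset.mem_univ i))
  -- choose lam : ρ i * lam i = a i where ∑ a i • p i = P last - ∑ ρ i • r i
  obtain ⟨a, -, ha⟩ := hspan (P (Fin.last (k + 1)) - ∑ i, ρ i • r i)
  set lam : Fin (k + 1) → F := fun i => a i / ρ i with hlam
  have hρlam : ∀ i, ρ i * lam i = a i := fun i => by
    rw [hlam]; dsimp only; rw [mul_comm, div_mul_cancel₀ _ (hρne i)]
  -- choose δ : ∑ δ i • p i = P last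
  obtain ⟨δ, -, hδ⟩ := hspan (P (Fin.last (k + 1)))
  refine ⟨lam, ρ, δ, ∑ i, (δ i * lam i) • p i + ∑ i, δ i • r i, fun u₁ u₂ => ?_⟩
  have key : ∀ c : Fin (k + 1) → F,
      ∑ i, c i * (lam i * (p i ⬝ᵥ u₁) + (p i ⬝ᵥ u₂ + r i ⬝ᵥ u₁))
        = (∑ i, (c i * lam i) • p i + ∑ i, c i • r i) ⬝ᵥ u₁
          + (∑ i, c i • p i) ⬝ᵥ u₂ := by
    intro c
    rw [add_dotProduct, sum_smul_dotProduct, sum_smul_dotProduct,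
      sum_smul_dotProduct, ← Finset.sum_add_distrib, ← Finset.sum_add_distrib]
    refine Finset.sum_congr rfl fun i _ => ?_
    ring
  constructor
  · rw [key ρ, hρ0, zero_dotProduct, add_zero]
    have : ∑ i, (ρ i * lam i) • p i = ∑ i, a i • p i := by
      refine Finset.sum_congr rfl fun i _ => by rw [hρlam]
    rw [this]
    have : (∑ i, a i • p i) + ∑ i, ρ i • r i = P (Fin.last (k + 1)) := by
      rw [ha]; abel
    rw [← this]
  · rw [key δ, hδ]
    ring
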